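/- Let p be prime and t = t_n·p^n with 1 ≤ t_n ≤ p-1, and let k be a positive integer all of whose base-p digits in positions 0 through n are zero (i.e., p^{n+1} divides k), with t ≤ k. Then p divides C(k,t), but for every i with 1 ≤ i ≤ t, p does not divide C(k-i, t-i). -/

import Mathlib

private lemma aux_mul_le {d M N : ℕ} (h1 : d ∣ M) (h2 : d ∣ N) (h : M < N + d) : M ≤ N := by
  obtain ⟨u, rfl⟩ := h1
  obtain ⟨v, rfl⟩ := h2
  rcases Nat.eq_zero_or_pos d with hd | hd
  · simp [hd]
  · have : d * u < d * (v + 1) := by rw [Nat.mul_add, Nat.mul_one]; exact h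
    exact Nat.mul_le_mul_left d (Nat.lt_succ_iff.mp (Nat.lt_of_mul_lt_mul_left this))

/-- If `t = t_n p^n` with `0 < t_n < p` and `p^(n+1) ∣ k` with `0 < t ≤ k`, then
`p ∣ C(k,t)` but `p ∤ C(k-i, t-i)` for all `1 ≤ i ≤ t`. -/
theorem dvd_choose_single_digit (p n tn t k : ℕ) (hp : p.Prime)
    (htn₀ : 0 < tn) (htnp : tn < p) (ht : t = tn * p ^ n)
    (hk : 0 < k) (hdvd : p ^ (n + 1) ∣ k) (htk : t ≤ k) :
    p ∣ k.choose t ∧ ∀ i, 1 ≤ i → i ≤ t → ¬ p ∣ (k - i).choose (t - i) := by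
  haveI : Fact p.Prime := ⟨hp⟩
  have hp1 : 1 < p := hp.one_lt
  have hppos : 0 < p := hp.pos
  have hpn : 0 < p ^ n := Nat.pow_pos hppos
  have htpos : 0 < t := by rw [ht]; exact Nat.mul_pos htn₀ hpn
  have htlt : t < p ^ (n + 1) := by
    rw [ht, pow_succ]
    calc tn * p ^ n < p * p ^ n := Nat.mul_lt_mul_of_pos_right htnp hpn
    _ = p ^ n * p := Nat.mul_comm _ _
  have hple : p ^ (n + 1) ≤ k := Nat.le_of_dvd hk hdvd
  constructor
  · -- p ∣ C(k, t)
    rw [hp.dvd_iff_one_le_factorization (Nat.choose_pos htk).ne',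
      Nat.factorization_def _ hp,
      padicValNat_choose htk (Nat.lt_succ_self (Nat.log p k))]
    rw [Nat.succ_le_iff, Finset.card_pos]
    refine ⟨n + 1, Finset.mem_filter.mpr ⟨Finset.mem_Ico.mpr ⟨Nat.succ_le_succ (Nat.zero_le n),
      Nat.succ_lt_succ ((Nat.le_log_iff_pow_le hp1 hk.ne').mpr hple)⟩, ?_⟩⟩
    -- carry at position n+1
    obtain ⟨c, hc⟩ := hdvd
    have hsplit : k - t = p ^ (n + 1) * (c - 1) + (p ^ (n + 1) - t) := by
      have h1 : p ^ (n + 1) * (c - 1) = k - p ^ (n + 1) := by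
        rw [Nat.mul_sub, Nat.mul_one, ← hc]
      omega
    rw [hsplit, Nat.mul_add_mod, Nat.mod_eq_of_lt (by omega : p ^ (n + 1) - t < p ^ (n + 1)),
      Nat.mod_eq_of_lt htlt]
    omega
  · -- second part
    intro i hi1 hit
    have hik : i ≤ k := le_trans hit htk
    have hkt : t - i ≤ k - i := by omega
    rw [hp.dvd_iff_one_le_factorization (Nat.choose_pos hkt).ne',
      Nat.factorization_def _ hp,
      padicValNat_choose hkt (Nat.lt_succ_self (Nat.log p (k - i)))]
    simp only [not_le, Nat.lt_one_iff, Finset.card_eq_zero, Finset.filter_eq_empty_iff]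
    intro j hj
    have hj1 : 1 ≤ j := (Finset.mem_Ico.mp hj).1
    have ha : k - i - (t - i) = k - t := by omega
    rw [ha]

    have hpjpos : 0 < p ^ j := Nat.pow_pos hppos
    rcases le_or_gt j n with hjn | hjn
    · -- low digits: p^j ∣ k - t
      have h1 : p ^ j ∣ k - t := by
        refine Nat.dvd_sub (dvd_trans (pow_dvd_pow p (by omega : j ≤ n + 1)) hdvd) ?_
        rw [ht]
        exact dvd_mul_of_dvd_right (pow_dvd_pow p hjn) tn
      have h2 : (k - t) % p ^ j = 0 := Nat.mod_eq_zero_of_dvd h1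
      have h3 := Nat.mod_lt (t - i) hpjpos
      omega
    · -- high digits
      have hjn' : n + 1 ≤ j := hjn
      have hdj : p ^ (n + 1) ∣ p ^ j := pow_dvd_pow p hjn'
      have hpj : p ^ (n + 1) ≤ p ^ j := Nat.pow_le_pow_right hppos hjn'
      have hmm : (t - i) % p ^ j = t - i := Nat.mod_eq_of_lt (by omega)
      have hkey : (k - t) % p ^ j + t ≤ p ^ j := by
        have hmodeq : (k - t) % p ^ j + t ≡ 0 [MOD p ^ (n + 1)] := by
          have h1 : (k - t) % p ^ j ≡ k - t [MOD p ^ (n + 1)] :=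
            (Nat.mod_modEq (k - t) (p ^ j)).of_dvd hdj
          have h2 : (k - t) % p ^ j + t ≡ (k - t) + t [MOD p ^ (n + 1)] := h1.add_right t
          have h3 : k - t + t = k := by omega
          rw [h3] at h2
          exact h2.trans ((Nat.modEq_zero_iff_dvd).mpr hdvd)
        have hdvd2 : p ^ (n + 1) ∣ (k - t) % p ^ j + t := (Nat.modEq_zero_iff_dvd).mp hmodeq
        refine aux_mul_le hdvd2 hdj ?_
        have := Nat.mod_lt (k - t) hpjpos
        omega
      have := Nat.mod_lt (k - t) hpjpos
      omega
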